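/- arXiv:1612.05660 — 2 statements merged into one kernel-verified Lean document; each statement's English description precedes it below -/
import Mathlib

section
/- Let J_C be a neural ideal and G a reduced Gröbner basis of J_C with respect to some monomial ordering. Then every pseudo-monomial contained in G is a minimal pseudo-monomial of J_C, i.e., belongs to the canonical form CF(J_C). -/
open MvPolynomial

universe u

/-- The pseudo-monomial `x_σ * ∏_{j ∈ τ} (1 + x_j)` in `F₂[x₁,…,xₙ]`. -/
noncomputable def psm {n : ℕ} (σ τ : Finset (Fin n)) : MvPolynomial (Fin n) (ZMod 2) :=
  (∏ i ∈ σ, X i) * ∏ j ∈ τ, (1 + X j)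

/-- A polynomial is a pseudo-monomial if it equals `psm σ τ` for disjoint `σ τ`. -/
def IsPseudoMonomial {n : ℕ} (f : MvPolynomial (Fin n) (ZMod 2)) : Prop :=
  ∃ σ τ : Finset (Fin n), Disjoint σ τ ∧ f = psm σ τ

/-- The characteristic polynomial `ρ_v = ∏ i (1 - v_i - x_i)` of a point `v ∈ {0,1}ⁿ`. -/
noncomputable def rho {n : ℕ} (v : Fin n → ZMod 2) : MvPolynomial (Fin n) (ZMod 2) :=
  ∏ i, (1 - C (v i) - X i)

/-- The neural ideal `J_C` of a code `Co ⊆ {0,1}ⁿ`. -/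
noncomputable def neuralIdeal {n : ℕ} (Co : Set (Fin n → ZMod 2)) :
    Ideal (MvPolynomial (Fin n) (ZMod 2)) :=
  Ideal.span {p | ∃ v, v ∉ Co ∧ p = rho v}

/-- The canonical form: the set of minimal pseudo-monomials of an ideal. -/
def canonicalForm {n : ℕ} (J : Ideal (MvPolynomial (Fin n) (ZMod 2))) :
    Set (MvPolynomial (Fin n) (ZMod 2)) :=
  {f | IsPseudoMonomial f ∧ f ∈ J ∧
    ∀ g : MvPolynomial (Fin n) (ZMod 2), IsPseudoMonomial g → g ∈ J → g ∣ f → g = f}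

/-- The multidegree (exponent of the leading term) of `f` w.r.t. a monomial order `m`. -/
noncomputable def leadDeg {n : ℕ} (m : MonomialOrder.{0,u} (Fin n))
    (f : MvPolynomial (Fin n) (ZMod 2)) : Fin n →₀ ℕ :=
  m.toSyn.symm (f.support.sup (fun d => m.toSyn d))

/-- The exponent vector of the square-free monomial `x_ω`. -/
noncomputable def expOf {n : ℕ} (ω : Finset (Fin n)) : Fin n →₀ ℕ :=
  ∑ i ∈ ω, Finsupp.single i 1

/-- `G` is a Gröbner basis of `J` w.r.t. the monomial order `m`: a finite subset of `J`
whose leading terms generate the leading term ideal, i.e. the leading term of every nonzero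
element of `J` is divisible by the leading term of some element of `G`. -/
def IsGB {n : ℕ} (m : MonomialOrder.{0,u} (Fin n)) (J : Ideal (MvPolynomial (Fin n) (ZMod 2)))
    (G : Set (MvPolynomial (Fin n) (ZMod 2))) : Prop :=
  G.Finite ∧ G ⊆ (J : Set (MvPolynomial (Fin n) (ZMod 2))) ∧
    ∀ f ∈ J, f ≠ 0 → ∃ g ∈ G, g ≠ 0 ∧ leadDeg m g ≤ leadDeg m f

/-- A reduced Gröbner basis: every element has leading coefficient 1, and no term of any
element is divisible by the leading term of another element. -/
def IsReducedGB {n : ℕ} (m : MonomialOrder.{0,u} (Fin n))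
    (J : Ideal (MvPolynomial (Fin n) (ZMod 2)))
    (G : Set (MvPolynomial (Fin n) (ZMod 2))) : Prop :=
  IsGB m J G ∧ (∀ g ∈ G, coeff (leadDeg m g) g = 1) ∧
    ∀ f ∈ G, ∀ g ∈ G, g ≠ f → ∀ d ∈ f.support, ¬ leadDeg m g ≤ d

/-- The universal Gröbner basis: the union of all reduced Gröbner bases. -/
def universalGB {n : ℕ} (J : Ideal (MvPolynomial (Fin n) (ZMod 2))) :
    Set (MvPolynomial (Fin n) (ZMod 2)) :=
  {f | ∃ (m : MonomialOrder.{0,u} (Fin n)) (G : Set (MvPolynomial (Fin n) (ZMod 2))),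
    IsReducedGB m J G ∧ f ∈ G}

/-- The receptive field code of a family of sets `U i` in a stimulus space `S`. -/
def rfCode {n : ℕ} {S : Type} (U : Fin n → Set S) : Set (Fin n → ZMod 2) :=
  {c | ((⋂ i ∈ {i : Fin n | c i = 1}, U i) \ ⋃ j ∈ {j : Fin n | c j = 0}, U j).Nonempty}

section Aux
open MonomialOrder
variable {n : ℕ} (m : MonomialOrder.{0,u} (Fin n))

lemma toSyn_leadDeg (f : MvPolynomial (Fin n) (ZMod 2)) :
    m.toSyn (leadDeg m f) = f.support.sup (fun d => m.toSyn d) := by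
  simp [leadDeg]

lemma leadDeg_mem_support {f : MvPolynomial (Fin n) (ZMod 2)} (hf : f ≠ 0) :
    leadDeg m f ∈ f.support := by
  obtain ⟨a, ha, hsup⟩ := Finset.exists_mem_eq_sup f.support
    (MvPolynomial.support_nonempty.mpr hf) (fun d => m.toSyn d)
  have : leadDeg m f = a := by
    apply m.toSyn.injective
    rw [toSyn_leadDeg, hsup]
  rwa [this]

lemma le_toSyn_leadDeg {f : MvPolynomial (Fin n) (ZMod 2)} {d : Fin n →₀ ℕ}
    (hd : d ∈ f.support) : m.toSyn d ≤ m.toSyn (leadDeg m f) := by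
  rw [toSyn_leadDeg]; exact Finset.le_sup hd

lemma leadDeg_mul {p q : MvPolynomial (Fin n) (ZMod 2)} (hp : p ≠ 0) (hq : q ≠ 0) :
    leadDeg m (p * q) = leadDeg m p + leadDeg m q := by
  have hadd : ∀ a b : Fin n →₀ ℕ, m.toSyn (a + b) = m.toSyn a + m.toSyn b := map_add _
  have hcoeff : MvPolynomial.coeff (leadDeg m p + leadDeg m q) (p * q) =
      MvPolynomial.coeff (leadDeg m p) p * MvPolynomial.coeff (leadDeg m q) q := by
    exact AddMonoidAlgebra.apply_add_of_supDegree_le hadd m.toSyn.injective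
      (le_of_eq (toSyn_leadDeg m p).symm) (le_of_eq (toSyn_leadDeg m q).symm)
  have hne : MvPolynomial.coeff (leadDeg m p + leadDeg m q) (p * q) ≠ 0 := by
    rw [hcoeff]
    exact mul_ne_zero (MvPolynomial.mem_support_iff.mp (leadDeg_mem_support m hp))
      (MvPolynomial.mem_support_iff.mp (leadDeg_mem_support m hq))
  apply m.toSyn.injective
  apply le_antisymm
  · have h2 : m.toSyn (leadDeg m (p * q)) ≤ m.toSyn (leadDeg m p) + m.toSyn (leadDeg m q) := by
      rw [toSyn_leadDeg]
      apply Finset.sup_le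
      intro d hd
      obtain ⟨u, hu, v, hv, rfl⟩ := Finset.mem_add.mp (MvPolynomial.support_mul p q hd)
      rw [hadd]
      exact add_le_add (le_toSyn_leadDeg m hu) (le_toSyn_leadDeg m hv)
    rw [hadd]
    exact h2
  · exact le_toSyn_leadDeg m (MvPolynomial.mem_support_iff.mpr hne)

lemma leadDeg_zero_eq_C {q : MvPolynomial (Fin n) (ZMod 2)} (hq : leadDeg m q = 0) :
    q = MvPolynomial.C (MvPolynomial.coeff 0 q) := by
  ext d
  rw [MvPolynomial.coeff_C]
  by_cases hd : d = 0
  · simp [hd, eq_comm]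
  · rw [if_neg (fun h => hd h.symm)]
    by_contra hc
    have hmem : d ∈ q.support := MvPolynomial.mem_support_iff.mpr hc
    have hle := le_toSyn_leadDeg m hmem
    rw [hq, map_zero] at hle
    have h0' : m.toSyn d = m.toSyn 0 := by
      rw [map_zero]
      exact le_antisymm hle (by simpa using (bot_le : (⊥ : m.syn) ≤ m.toSyn d))
    exact hd (m.toSyn.injective h0')

lemma psm_ne_zero {σ τ : Finset (Fin n)} (hdisj : Disjoint σ τ) : psm σ τ ≠ 0 := by
  intro h0
  have heval : MvPolynomial.eval (fun i => if i ∈ σ then (1 : ZMod 2) else 0) (psm σ τ) = 1 := by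
    unfold psm
    rw [map_mul, MvPolynomial.eval_prod, MvPolynomial.eval_prod,
        Finset.prod_eq_one (fun i hi => by simp [hi]),
        Finset.prod_eq_one (fun j hj => by
          have hjs : j ∉ σ := Finset.disjoint_right.mp hdisj hj
          simp [hjs]), one_mul]
  rw [h0, map_zero] at heval
  exact zero_ne_one heval

end Aux

/-- every pseudo-monomial in a reduced Gröbner basis of a neural ideal belongs
to the canonical form. -/
theorem stmt11 {n : ℕ} (Co : Set (Fin n → ZMod 2)) (m : MonomialOrder.{0,u} (Fin n))
    (G : Set (MvPolynomial (Fin n) (ZMod 2))) (h : IsReducedGB m (neuralIdeal Co) G) :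
    ∀ f ∈ G, IsPseudoMonomial f → f ∈ canonicalForm (neuralIdeal Co) := by
  intro f hf hfpm
  set J := neuralIdeal Co with hJ
  obtain ⟨⟨hGfin, hGsub, hGB⟩, hlc, hred⟩ := h
  have hfJ : f ∈ J := hGsub hf
  have hf1 : MvPolynomial.coeff (leadDeg m f) f = 1 := hlc f hf
  have hfne : f ≠ 0 := fun h0 => by simp [h0] at hf1
  refine ⟨hfpm, hfJ, ?_⟩
  intro g hgpm hgJ hgdvd
  obtain ⟨σ, τ, hdisj, rfl⟩ := hgpm
  have hgne : psm σ τ ≠ 0 := psm_ne_zero hdisj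
  obtain ⟨q, hq⟩ := hgdvd
  have hqne : q ≠ 0 := fun h0 => hfne (by rw [hq, h0, mul_zero])
  have hmul : leadDeg m f = leadDeg m (psm σ τ) + leadDeg m q := by
    rw [hq]; exact leadDeg_mul m hgne hqne
  have hgf : leadDeg m (psm σ τ) ≤ leadDeg m f := hmul ▸ le_self_add
  obtain ⟨g', hg'G, hg'ne, hg'le⟩ := hGB (psm σ τ) hgJ hgne
  have hg'f : g' = f := by
    by_contra hne
    exact hred f hf g' hg'G hne (leadDeg m f)
      (MvPolynomial.mem_support_iff.mpr (by rw [hf1]; exact one_ne_zero))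
      (le_trans hg'le hgf)
  have hfg : leadDeg m f ≤ leadDeg m (psm σ τ) := hg'f ▸ hg'le
  have heq : leadDeg m (psm σ τ) = leadDeg m f := le_antisymm hgf hfg
  have hq0 : leadDeg m q = 0 := by
    have := hmul
    rw [heq, left_eq_add] at this
    exact this
  have hqC : q = MvPolynomial.C (MvPolynomial.coeff 0 q) := leadDeg_zero_eq_C m hq0
  have hcne : MvPolynomial.coeff 0 q ≠ 0 := fun h0 => hqne (by rw [hqC, h0, map_zero])
  have hc1 : MvPolynomial.coeff 0 q = 1 := by
    revert hcne; generalize MvPolynomial.coeff 0 q = c; revert c; decide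
  rw [hq, hqC, hc1, map_one, mul_one]
end

section
/- Let 𝒰 = {U₁,…,Uₙ} be sets in a stimulus space X with receptive field code C = C(𝒰), and suppose ∅ ≠ U_i = U_j ⊊ X for some i ≠ j. Then both f = x_i(x_j+1) and g = x_j(x_i+1) are minimal pseudo-monomials of J_C with the same leading term x_i x_j under every monomial ordering, and consequently the canonical form CF(J_C) is not a Gröbner basis of J_C. -/
open MvPolynomial

universe u

section Aux

open Finset MvPolynomial

variable {n : ℕ}

lemma expOf_apply (ω : Finset (Fin n)) (k : Fin n) :
    expOf ω k = if k ∈ ω then 1 else 0 := by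
  classical
  rw [expOf, Finset.sum_apply']
  simp [Finsupp.single_apply]

lemma expOf_union {σ τ : Finset (Fin n)} (h : Disjoint σ τ) :
    expOf (σ ∪ τ) = expOf σ + expOf τ :=
  Finset.sum_union h

lemma expOf_insert {k : Fin n} {τ : Finset (Fin n)} (h : k ∉ τ) :
    expOf (insert k τ) = Finsupp.single k 1 + expOf τ := by
  simp [expOf, Finset.sum_insert h]

lemma prodX_eq (σ : Finset (Fin n)) :
    (∏ i ∈ σ, X i : MvPolynomial (Fin n) (ZMod 2)) = monomial (expOf σ) 1 := by
  classical
  induction σ using Finset.induction with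
  | empty => simp [expOf]
  | @insert k σ h ih =>
    rw [Finset.prod_insert h, ih, expOf_insert h, X, monomial_mul, one_mul]

lemma support_prodOneAdd (τ : Finset (Fin n)) :
    ∀ d ∈ (∏ k ∈ τ, (1 + X k) : MvPolynomial (Fin n) (ZMod 2)).support, d ≤ expOf τ := by
  classical
  induction τ using Finset.induction with
  | empty =>
    intro d hd
    rw [Finset.prod_empty, mem_support_iff, coeff_one] at hd
    rcases eq_or_ne d 0 with rfl | h
    · exact le_rfl
    · simp [Ne.symm h] at hd
  | @insert k τ hk ih =>
    intro d hd
    rw [Finset.prod_insert hk] at hd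
    obtain ⟨a, ha, b, hb, rfl⟩ := Finset.mem_add.mp (MvPolynomial.support_mul _ _ hd)
    have ha' : a ≤ Finsupp.single k 1 := by
      rcases eq_or_ne a 0 with rfl | h0
      · exact zero_le
      rcases eq_or_ne a (Finsupp.single k 1) with rfl | h1
      · exact le_rfl
      · rw [mem_support_iff, coeff_add, coeff_one, coeff_X'] at ha
        simp [Ne.symm h0, Ne.symm h1] at ha
    rw [expOf_insert hk]
    exact add_le_add ha' (ih b hb)

lemma coeff_top_prodOneAdd (τ : Finset (Fin n)) :
    coeff (expOf τ) (∏ k ∈ τ, (1 + X k) : MvPolynomial (Fin n) (ZMod 2)) = 1 := by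
  classical
  induction τ using Finset.induction with
  | empty => simp [expOf]
  | @insert k τ hk ih =>
    have hins := expOf_insert hk
    have hzero : coeff (Finsupp.single k 1 + expOf τ)
        (∏ k ∈ τ, (1 + X k) : MvPolynomial (Fin n) (ZMod 2)) = 0 := by
      by_contra h
      have h2 := support_prodOneAdd τ _ (mem_support_iff.mpr h)
      have h3 := h2 k
      simp only [Finsupp.add_apply, Finsupp.single_eq_same, expOf_apply, hk,
        if_neg hk] at h3
      omega
    rw [Finset.prod_insert hk, add_mul, one_mul, coeff_add, hins, hzero, coeff_X_mul, ih,
      zero_add]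

lemma psm_eq (σ τ : Finset (Fin n)) :
    psm σ τ = monomial (expOf σ) 1 * ∏ k ∈ τ, (1 + X k) := by
  rw [psm, prodX_eq]

lemma psm_support_le (σ τ : Finset (Fin n)) :
    ∀ d ∈ (psm σ τ).support, d ≤ expOf σ + expOf τ := by
  classical
  intro d hd
  rw [psm_eq] at hd
  obtain ⟨a, ha, b, hb, rfl⟩ := Finset.mem_add.mp (MvPolynomial.support_mul _ _ hd)
  have ha' : a = expOf σ := by
    simpa [MvPolynomial.support_monomial] using ha
  subst ha'
  exact add_le_add le_rfl (support_prodOneAdd τ b hb)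

lemma psm_coeff_top {σ τ : Finset (Fin n)} (h : Disjoint σ τ) :
    coeff (expOf (σ ∪ τ)) (psm σ τ) = 1 := by
  rw [psm_eq, expOf_union h, coeff_monomial_mul, coeff_top_prodOneAdd, one_mul]

lemma leadDeg_eq_of' (m : MonomialOrder.{0,u} (Fin n))
    (f : MvPolynomial (Fin n) (ZMod 2)) (e : Fin n →₀ ℕ)
    (he : e ∈ f.support) (hmax : ∀ d ∈ f.support, m.toSyn d ≤ m.toSyn e) :
    leadDeg m f = e := by
  have h : f.support.sup (fun d => m.toSyn d) = m.toSyn e :=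
    le_antisymm (Finset.sup_le hmax) (Finset.le_sup he)
  rw [leadDeg, h, AddEquiv.symm_apply_apply]

lemma psm_leadDeg (m : MonomialOrder.{0,u} (Fin n)) {σ τ : Finset (Fin n)}
    (h : Disjoint σ τ) :
    leadDeg m (psm σ τ) = expOf (σ ∪ τ) := by
  refine leadDeg_eq_of' m _ _ (mem_support_iff.mpr (by rw [psm_coeff_top h]; exact one_ne_zero))
    fun d hd => m.toSyn_monotone ?_
  rw [expOf_union h]
  exact psm_support_le σ τ d hd

end Aux

section Aux2

open Finset MvPolynomial

variable {n : ℕ}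

lemma eval_mem_neuralIdeal {Co : Set (Fin n → ZMod 2)} {c : Fin n → ZMod 2} (hc : c ∈ Co)
    {p : MvPolynomial (Fin n) (ZMod 2)} (hp : p ∈ neuralIdeal Co) : eval c p = 0 := by
  have key : neuralIdeal Co ≤ RingHom.ker (eval c) := by
    rw [neuralIdeal, Ideal.span_le]
    rintro _ ⟨v, hv, rfl⟩
    have hvc : v ≠ c := fun h => hv (h ▸ hc)
    obtain ⟨k, hk⟩ := Function.ne_iff.mp hvc
    simp only [SetLike.mem_coe, RingHom.mem_ker, rho, map_prod]
    refine Finset.prod_eq_zero (Finset.mem_univ k) ?_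
    simp only [map_sub, map_one, eval_C, eval_X]
    revert hk
    have : ∀ a b : ZMod 2, a ≠ b → 1 - a - b = 0 := by decide
    exact this (v k) (c k)
  exact key hp

lemma cw_mem {S : Type} (U : Fin n → Set S) (p : S) :
    ∃ c ∈ rfCode U, ∀ k, (c k = 1 ↔ p ∈ U k) ∧ (c k = 0 ↔ p ∉ U k) := by
  classical
  refine ⟨fun k => if p ∈ U k then 1 else 0, ⟨p, ?_, ?_⟩, fun k => ?_⟩
  · simp only [Set.mem_iInter]
    intro k hk
    rw [Set.mem_setOf_eq] at hk
    by_contra h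
    rw [if_neg h] at hk
    exact one_ne_zero hk.symm
  · simp only [Set.mem_iUnion]
    rintro ⟨k, hk, hpk⟩
    rw [Set.mem_setOf_eq] at hk
    by_cases h : p ∈ U k
    · rw [if_pos h] at hk; exact one_ne_zero hk
    · exact h hpk
  · by_cases h : p ∈ U k <;> simp [h]

lemma code_eq {S : Type} {U : Fin n → Set S} {i j : Fin n} (heq : U i = U j) :
    ∀ c ∈ rfCode U, c i = c j := by
  rintro c ⟨p, hp1, hp2⟩
  have hmem : ∀ k, c k = 1 → p ∈ U k := by
    intro k hk
    exact Set.mem_iInter₂.mp hp1 k hk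
  have hnot : ∀ k, c k = 0 → p ∉ U k := by
    intro k hk hpk
    exact hp2 (Set.mem_iUnion₂.mpr ⟨k, hk, hpk⟩)
  have h01 : ∀ a : ZMod 2, a = 0 ∨ a = 1 := by decide
  rcases h01 (c i) with h1 | h1 <;> rcases h01 (c j) with h2 | h2 <;> rw [h1, h2]
  · exact ((hnot i h1) (by rw [heq]; exact hmem j h2)).elim
  · exact ((hnot j h2) (by rw [← heq]; exact hmem i h1)).elim

lemma two_eq_zero' : (2 : MvPolynomial (Fin n) (ZMod 2)) = 0 := by
  rw [← map_ofNat (C : ZMod 2 →+* MvPolynomial (Fin n) (ZMod 2)) 2]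
  have : ((2 : ZMod 2)) = 0 := by decide
  rw [this, map_zero]

lemma mem_J {Co : Set (Fin n → ZMod 2)} {a b : Fin n} (hab : a ≠ b)
    (h : ∀ c ∈ Co, c a = c b) :
    (X a * (X b + 1) : MvPolynomial (Fin n) (ZMod 2)) ∈ neuralIdeal Co := by
  classical
  set T : Fin n → Finset (ZMod 2) :=
    fun k => if k = a then {1} else if k = b then {0} else Finset.univ with hT
  have key : (X a * (X b + 1) : MvPolynomial (Fin n) (ZMod 2))
      = ∑ v ∈ Fintype.piFinset T, rho v := by
    simp only [rho]
    rw [← Finset.prod_univ_sum T (fun k x => (1 - C x - X k : MvPolynomial (Fin n) (ZMod 2)))]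
    rw [← Finset.mul_prod_erase Finset.univ _ (Finset.mem_univ a),
        ← Finset.mul_prod_erase _ _
          (Finset.mem_erase.mpr ⟨Ne.symm hab, Finset.mem_univ b⟩)]
    have ha : ∑ x ∈ T a, (1 - C x - X a : MvPolynomial (Fin n) (ZMod 2)) = X a := by
      simp only [hT]
      rw [if_pos trivial, Finset.sum_singleton, map_one]
      linear_combination (-(X a : MvPolynomial (Fin n) (ZMod 2))) * two_eq_zero'
    have hb : ∑ x ∈ T b, (1 - C x - X b : MvPolynomial (Fin n) (ZMod 2)) = X b + 1 := by
      simp only [hT]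
      rw [if_neg (Ne.symm hab), if_pos trivial, Finset.sum_singleton, map_zero]
      linear_combination (-(X b : MvPolynomial (Fin n) (ZMod 2))) * two_eq_zero'
    have hU : (Finset.univ : Finset (ZMod 2)) = {0, 1} := by decide
    have hrest : ∏ k ∈ (Finset.univ.erase a).erase b,
        (∑ x ∈ T k, (1 - C x - X k : MvPolynomial (Fin n) (ZMod 2))) = 1 := by
      refine Finset.prod_eq_one fun k hk => ?_
      obtain ⟨hkb, hka⟩ : k ≠ b ∧ k ≠ a := by
        simpa [Finset.mem_erase] using hk
      simp only [hT]
      rw [if_neg hka, if_neg hkb, hU,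
        Finset.sum_insert (by decide), Finset.sum_singleton, map_zero, map_one]
      linear_combination (-(X k : MvPolynomial (Fin n) (ZMod 2))) * two_eq_zero'
    rw [ha, hb, hrest, mul_one]
  rw [key]
  refine Ideal.sum_mem _ fun v hv => Ideal.subset_span ⟨v, ?_, rfl⟩
  intro hvC
  have h1 : v a = 1 := by
    have := Fintype.mem_piFinset.mp hv a
    simpa [hT] using this
  have h2 : v b = 0 := by
    have := Fintype.mem_piFinset.mp hv b
    simpa [hT, Ne.symm hab] using this
  have := h v hvC
  rw [h1, h2] at this
  exact one_ne_zero this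

lemma eval_psm (v : Fin n → ZMod 2) (σ τ : Finset (Fin n)) :
    eval v (psm σ τ) = (∏ k ∈ σ, v k) * ∏ k ∈ τ, (1 + v k) := by
  simp [psm]

end Aux2

section Aux3

open Finset MvPolynomial

variable {n : ℕ}

lemma div_constraint {σ τ : Finset (Fin n)} {a b : Fin n} (hab : a ≠ b)
    (hdvd : psm σ τ ∣ (X a * (X b + 1) : MvPolynomial (Fin n) (ZMod 2))) :
    σ ⊆ {a} ∧ τ ⊆ {b} := by
  classical
  obtain ⟨q, hq⟩ := hdvd
  have hba : b ≠ a := Ne.symm hab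
  constructor
  · intro k hk
    rw [Finset.mem_singleton]
    by_contra hka
    set v : Fin n → ZMod 2 := fun l => if l = a then 1 else 0 with hv
    have h0 : eval v (psm σ τ) = 0 := by
      rw [eval_psm]
      refine mul_eq_zero.mpr (Or.inl (Finset.prod_eq_zero hk ?_))
      simp [hv, hka]
    have hcon : eval v (X a * (X b + 1) : MvPolynomial (Fin n) (ZMod 2)) = 0 := by
      rw [hq, map_mul, h0, zero_mul]
    simp [hv, hba] at hcon
  · intro k hk
    rw [Finset.mem_singleton]
    by_contra hkb
    set v : Fin n → ZMod 2 := fun l => if l = b then 0 else 1 with hv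
    have h0 : eval v (psm σ τ) = 0 := by
      rw [eval_psm]
      refine mul_eq_zero.mpr (Or.inr (Finset.prod_eq_zero hk ?_))
      have : ((1 : ZMod 2) + 1) = 0 := by decide
      simp [hv, hkb, this]
    have hcon : eval v (X a * (X b + 1) : MvPolynomial (Fin n) (ZMod 2)) = 0 := by
      rw [hq, map_mul, h0, zero_mul]
    simp [hv, hab] at hcon

lemma key_CF {Co : Set (Fin n → ZMod 2)} {a b : Fin n} (hab : a ≠ b)
    (hcode : ∀ c ∈ Co, c a = c b)
    {c1 : Fin n → ZMod 2} (hc1 : c1 ∈ Co) (hc1a : c1 a = 1)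
    {c0 : Fin n → ZMod 2} (hc0 : c0 ∈ Co) (hc0b : c0 b = 0) :
    (X a * (X b + 1) : MvPolynomial (Fin n) (ZMod 2)) ∈ canonicalForm (neuralIdeal Co) := by
  refine ⟨⟨{a}, {b}, by simp [Ne.symm hab, hab], by rw [psm, Finset.prod_singleton, Finset.prod_singleton,
      add_comm 1 (X b)]⟩, mem_J hab hcode, ?_⟩
  rintro g ⟨σ, τ, hdisj, rfl⟩ hgJ hgdvd
  obtain ⟨hσ, hτ⟩ := div_constraint hab hgdvd
  rcases Finset.subset_singleton_iff.mp hσ with h1 | h1 <;>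
    rcases Finset.subset_singleton_iff.mp hτ with h2 | h2
  · have := eval_mem_neuralIdeal hc1 hgJ
    rw [eval_psm, h1, h2] at this
    simp at this
  · have := eval_mem_neuralIdeal hc0 hgJ
    rw [eval_psm, h1, h2] at this
    simp [hc0b] at this
  · have := eval_mem_neuralIdeal hc1 hgJ
    rw [eval_psm, h1, h2] at this
    simp [hc1a] at this
  · rw [h1, h2, psm, Finset.prod_singleton, Finset.prod_singleton, add_comm 1 (X b)]

lemma no_small_psm {Co : Set (Fin n → ZMod 2)} {σ τ : Finset (Fin n)} {k : Fin n}
    (hσ : σ ⊆ {k}) (hτ : τ ⊆ {k}) (hdisj : Disjoint σ τ)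
    {c1 : Fin n → ZMod 2} (hc1 : c1 ∈ Co) (hc1k : c1 k = 1)
    {c0 : Fin n → ZMod 2} (hc0 : c0 ∈ Co) (hc0k : c0 k = 0) :
    psm σ τ ∉ neuralIdeal Co := by
  intro hJ
  rcases Finset.subset_singleton_iff.mp hσ with h1 | h1 <;>
    rcases Finset.subset_singleton_iff.mp hτ with h2 | h2
  · have := eval_mem_neuralIdeal hc1 hJ
    rw [eval_psm, h1, h2] at this
    simp at this
  · have := eval_mem_neuralIdeal hc0 hJ
    rw [eval_psm, h1, h2] at this
    simp [hc0k] at this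
  · have := eval_mem_neuralIdeal hc1 hJ
    rw [eval_psm, h1, h2] at this
    simp [hc1k] at this
  · rw [h1, h2] at hdisj
    simp at hdisj

end Aux3

/-- if `∅ ≠ U_i = U_j ⊊ X` with `i ≠ j`, then `x_i(x_j+1)` and `x_j(x_i+1)`
are both minimal pseudo-monomials of `J_C` with the same leading term `x_i x_j` under every
monomial ordering, and the canonical form is not a Gröbner basis. -/
theorem stmt14 {n : ℕ} {S : Type} (U : Fin n → Set S) (i j : Fin n) (hij : i ≠ j)
    (hne : (U i).Nonempty) (heq : U i = U j) (hprop : U i ≠ Set.univ) :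
    (X i * (X j + 1) : MvPolynomial (Fin n) (ZMod 2)) ∈
        canonicalForm (neuralIdeal (rfCode U)) ∧
    (X j * (X i + 1) : MvPolynomial (Fin n) (ZMod 2)) ∈
        canonicalForm (neuralIdeal (rfCode U)) ∧
    (∀ m : MonomialOrder.{0,u} (Fin n),
      leadDeg m (X i * (X j + 1)) = expOf {i, j} ∧
      leadDeg m (X j * (X i + 1)) = expOf {i, j}) ∧
    (∀ m : MonomialOrder.{0,u} (Fin n),
      ¬ IsGB m (neuralIdeal (rfCode U)) (canonicalForm (neuralIdeal (rfCode U)))) := by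
  classical
  obtain ⟨p, hp⟩ := hne
  obtain ⟨q, hq⟩ : ∃ q, q ∉ U i := by
    by_contra h
    push_neg at h
    exact hprop (Set.eq_univ_of_forall h)
  obtain ⟨c1, hc1, hc1spec⟩ := cw_mem U p
  obtain ⟨c0, hc0, hc0spec⟩ := cw_mem U q
  have hc1i : c1 i = 1 := (hc1spec i).1.mpr hp
  have hc1j : c1 j = 1 := (hc1spec j).1.mpr (by rw [← heq]; exact hp)
  have hc0i : c0 i = 0 := (hc0spec i).2.mpr hq
  have hc0j : c0 j = 0 := (hc0spec j).2.mpr (by rw [← heq]; exact hq)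
  have hcode : ∀ c ∈ rfCode U, c i = c j := code_eq heq
  have hcode' : ∀ c ∈ rfCode U, c j = c i := fun c hc => (hcode c hc).symm
  have hdij : Disjoint ({i} : Finset (Fin n)) {j} := by simp [Ne.symm hij, hij]
  have hdji : Disjoint ({j} : Finset (Fin n)) {i} := by simp [hij, Ne.symm hij]
  have hpsmf : (X i * (X j + 1) : MvPolynomial (Fin n) (ZMod 2)) = psm {i} {j} := by
    rw [psm, Finset.prod_singleton, Finset.prod_singleton, add_comm 1 (X j)]
  have hpsmg : (X j * (X i + 1) : MvPolynomial (Fin n) (ZMod 2)) = psm {j} {i} := by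
    rw [psm, Finset.prod_singleton, Finset.prod_singleton, add_comm 1 (X i)]
  refine ⟨key_CF hij hcode hc1 hc1i hc0 hc0j,
    key_CF (Ne.symm hij) hcode' hc1 hc1j hc0 hc0i, ?_, ?_⟩
  · intro m
    have e1 : ({i} ∪ {j} : Finset (Fin n)) = {i, j} := by ext x; simp
    have e2 : ({j} ∪ {i} : Finset (Fin n)) = {i, j} := by ext x; simp [or_comm]
    constructor
    · rw [hpsmf, psm_leadDeg m hdij, e1]
    · rw [hpsmg, psm_leadDeg m hdji, e2]
  · intro m hGB
    obtain ⟨-, -, hmax⟩ := hGB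
    have hfJ := mem_J hij hcode
    have hgJ := mem_J (Ne.symm hij) hcode'
    have hhJ : (X i + X j : MvPolynomial (Fin n) (ZMod 2)) ∈ neuralIdeal (rfCode U) := by
      have hsum := Ideal.add_mem _ hfJ hgJ
      have heq2 : (X i * (X j + 1) + X j * (X i + 1) : MvPolynomial (Fin n) (ZMod 2))
          = X i + X j := by
        linear_combination (X i * X j : MvPolynomial (Fin n) (ZMod 2)) * two_eq_zero'
      rwa [heq2] at hsum
    have hsne : (Finsupp.single i 1 : Fin n →₀ ℕ) ≠ Finsupp.single j 1 :=
      fun h => hij (Finsupp.single_left_injective one_ne_zero h)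
    have hci : coeff (Finsupp.single i 1) (X i + X j : MvPolynomial (Fin n) (ZMod 2)) = 1 := by
      classical
      rw [coeff_add, coeff_X', coeff_X', if_pos rfl, if_neg (Ne.symm hsne), add_zero]
    have hcj : coeff (Finsupp.single j 1) (X i + X j : MvPolynomial (Fin n) (ZMod 2)) = 1 := by
      classical
      rw [coeff_add, coeff_X', coeff_X', if_neg hsne, if_pos rfl, zero_add]
    have hne0 : (X i + X j : MvPolynomial (Fin n) (ZMod 2)) ≠ 0 := fun h => by
      rw [h, coeff_zero] at hci
      exact one_ne_zero hci.symm
    have hmemi : Finsupp.single i 1 ∈ (X i + X j : MvPolynomial (Fin n) (ZMod 2)).support :=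
      mem_support_iff.mpr (by rw [hci]; exact one_ne_zero)
    have hmemj : Finsupp.single j 1 ∈ (X i + X j : MvPolynomial (Fin n) (ZMod 2)).support :=
      mem_support_iff.mpr (by rw [hcj]; exact one_ne_zero)
    have hsupp : ∀ d ∈ (X i + X j : MvPolynomial (Fin n) (ZMod 2)).support,
        d = Finsupp.single i 1 ∨ d = Finsupp.single j 1 := by
      intro d hd
      by_contra hcon
      push_neg at hcon
      rw [mem_support_iff] at hd
      apply hd
      rw [coeff_add, coeff_X', coeff_X', if_neg (fun h => hcon.1 h.symm),
        if_neg (fun h => hcon.2 h.symm), add_zero]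
    have hklead : ∃ k : Fin n, c1 k = 1 ∧ c0 k = 0 ∧
        leadDeg m (X i + X j : MvPolynomial (Fin n) (ZMod 2)) = Finsupp.single k 1 := by
      rcases le_total (m.toSyn (Finsupp.single i 1)) (m.toSyn (Finsupp.single j 1)) with hc | hc
      · refine ⟨j, hc1j, hc0j, leadDeg_eq_of' m _ _ hmemj fun d hd => ?_⟩
        rcases hsupp d hd with rfl | rfl
        · exact hc
        · exact le_rfl
      · refine ⟨i, hc1i, hc0i, leadDeg_eq_of' m _ _ hmemi fun d hd => ?_⟩
        rcases hsupp d hd with rfl | rfl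
        · exact le_rfl
        · exact hc
    obtain ⟨k, hk1, hk0, hklead⟩ := hklead
    obtain ⟨g, hgCF, hg0, hle⟩ := hmax _ hhJ hne0
    obtain ⟨⟨σ, τ, hdisj, rfl⟩, hgJ', -⟩ := hgCF
    rw [psm_leadDeg m hdisj, hklead] at hle
    have hsubk : σ ∪ τ ⊆ {k} := by
      intro l hl
      rw [Finset.mem_singleton]
      have h1 := Finsupp.le_def.mp hle l
      rw [expOf_apply, if_pos hl] at h1
      by_contra hlk
      rw [Finsupp.single_apply, if_neg (fun h => hlk h.symm)] at h1
      omega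
    exact no_small_psm ((Finset.subset_union_left).trans hsubk)
      ((Finset.subset_union_right).trans hsubk) hdisj hc1 hk1 hc0 hk0 hgJ'
end
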